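/- Let n ∈ ℕ be odd and let x ∈ ℝ with 0 < x < 1. Then (1−x)·D_n(0) + x·D_n(1) − (1/(1+x))·D_n(0) − (x/(1+x))·D_n(x+1) ≥ 0. -/

import Mathlib

open Classical in
noncomputable def D : ℕ → ℝ → ℝ
  | 0, x => if x ≤ 0 then 1 else 0
  | n + 1, x =>
    if x ≤ 0 then 1
    else if ((n : ℝ) + 1) < x then 0
    else if ∃ m : ℤ, x = (m : ℝ) then
      (1 / 2) * D n (x - 1) + (1 / 2) * D n (x + 1)
    else if Odd n ∧ x < 1 then
      (1 - x) * D n 0 + x * D n 1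
    else if Even (⌊x⌋ + (n : ℤ)) then
      (1 / (1 + Int.fract x)) * D n (⌊x⌋ : ℝ)
        + (Int.fract x / (1 + Int.fract x)) * D n (x + 1)
    else
      ((1 - Int.fract x) / (2 - Int.fract x)) * D n (x - 1)
        + (1 / (2 - Int.fract x)) * D n (⌈x⌉ : ℝ)

lemma D_of_nonpos (n : ℕ) (x : ℝ) (h : x ≤ 0) : D n x = 1 := by
  cases n with
  | zero => rw [D]; simp [h]
  | succ n => rw [D]; simp [h]

lemma D_of_gt (n : ℕ) (x : ℝ) (h : (n : ℝ) < x) : D n x = 0 := by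
  cases n with
  | zero => rw [D]; simp at h ⊢; linarith
  | succ n =>
    rw [D]
    rw [if_neg (by push_cast at h ⊢; linarith), if_pos (by push_cast at h ⊢; linarith)]

lemma D_bounds (n : ℕ) (x : ℝ) : 0 ≤ D n x ∧ D n x ≤ 1 := by
  induction n generalizing x with
  | zero => rw [D]; split_ifs <;> norm_num
  | succ n ih =>
    rw [D]
    have hf0 := Int.fract_nonneg x
    have hf1 := Int.fract_lt_one x
    split_ifs with h1 h2 h3 h4 h5
    · norm_num
    · norm_num
    · have a := ih (x - 1); have b := ih (x + 1)
      constructor <;> nlinarith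
    · have a := ih 0; have b := ih 1
      push_neg at h1
      obtain ⟨_, hx1⟩ := h4
      constructor <;> nlinarith
    · have a := ih (⌊x⌋ : ℝ); have b := ih (x + 1)
      have c1 : (0:ℝ) ≤ 1 / (1 + Int.fract x) := by positivity
      have c2 : (0:ℝ) ≤ Int.fract x / (1 + Int.fract x) := by
        apply div_nonneg hf0; linarith
      have key : 1 / (1 + Int.fract x) + Int.fract x / (1 + Int.fract x) = 1 := by
        rw [← add_div, div_eq_one_iff_eq (by linarith)]
      constructor
      · nlinarith [mul_nonneg c1 a.1, mul_nonneg c2 b.1]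
      · nlinarith [mul_le_mul_of_nonneg_left a.2 c1, mul_le_mul_of_nonneg_left b.2 c2]
    · have a := ih (x - 1); have b := ih (⌈x⌉ : ℝ)
      have c1 : (0:ℝ) ≤ (1 - Int.fract x) / (2 - Int.fract x) := by
        apply div_nonneg <;> linarith
      have c2 : (0:ℝ) ≤ 1 / (2 - Int.fract x) := div_nonneg (by norm_num) (by linarith)
      have key : (1 - Int.fract x) / (2 - Int.fract x) + 1 / (2 - Int.fract x) = 1 := by
        rw [← add_div, div_eq_one_iff_eq (by linarith)]; ring
      constructor
      · nlinarith [mul_nonneg c1 a.1, mul_nonneg c2 b.1]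
      · nlinarith [mul_le_mul_of_nonneg_left a.2 c1, mul_le_mul_of_nonneg_left b.2 c2]

lemma D_nonneg (n : ℕ) (x : ℝ) : 0 ≤ D n x := (D_bounds n x).1
lemma D_le_one (n : ℕ) (x : ℝ) : D n x ≤ 1 := (D_bounds n x).2

lemma D_int_eval (n k : ℕ) (hk : 0 < k) (hk2 : k ≤ n + 1) :
    D (n + 1) (k : ℝ) = (1 / 2) * D n ((k : ℝ) - 1) + (1 / 2) * D n ((k : ℝ) + 1) := by
  have hk' : (0:ℝ) < k := by exact_mod_cast hk
  have hk2' : (k:ℝ) ≤ (n:ℝ) + 1 := by exact_mod_cast hk2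
  rw [D, if_neg (not_le.mpr hk'), if_neg (not_lt.mpr hk2'),
    if_pos ⟨(k : ℤ), by push_cast; ring⟩]

lemma D_mono2 (m : ℕ) : ∀ k : ℕ, D m (k : ℝ) ≤ D (m + 2) (k : ℝ) := by
  induction m with
  | zero =>
    intro k
    cases k with
    | zero => simp [D_of_nonpos]
    | succ k =>
      rw [D_of_gt 0 _ (by push_cast; positivity)]
      exact D_nonneg _ _
  | succ m ih =>
    intro k
    cases k with
    | zero => simp [D_of_nonpos]
    | succ k =>
      by_cases h : k + 1 ≤ m + 1
      · rw [D_int_eval m (k+1) (by omega) h, D_int_eval (m+2) (k+1) (by omega) (by omega)]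
        have e1 : ((k+1:ℕ):ℝ) - 1 = ((k:ℕ):ℝ) := by push_cast; ring
        have e2 : ((k+1:ℕ):ℝ) + 1 = ((k+2:ℕ):ℝ) := by push_cast; ring
        rw [e1, e2]
        linarith [ih k, ih (k+2)]
      · rw [D_of_gt (m+1) _ (show ((m+1:ℕ):ℝ) < ((k+1:ℕ):ℝ) by exact_mod_cast (by omega : m+1 < k+1))]
        exact D_nonneg _ _

lemma D_frac_odd (m : ℕ) (hm : Odd m) (x : ℝ) (hx0 : 0 < x) (hx1 : x < 1) :
    D (m + 1) x = (1 - x) * D m 0 + x * D m 1 := by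
  rw [D, if_neg (not_le.mpr hx0),
    if_neg (not_lt.mpr (by linarith [Nat.cast_nonneg (α := ℝ) m])),
    if_neg (by rintro ⟨j, rfl⟩
               have h1 : (0:ℤ) < j := by exact_mod_cast hx0
               have h2 : j < 1 := by exact_mod_cast hx1
               omega),
    if_pos ⟨hm, hx1⟩]

lemma D_last (m : ℕ) (hm : Even m) (hm1 : 1 ≤ m) (x : ℝ) (hx0 : 0 < x) (hx1 : x < 1) :
    D (m + 1) (x + 1) = ((1 - x) / (2 - x)) * D m x + (1 / (2 - x)) * D m 2 := by
  have hm1' : (1:ℝ) ≤ m := by exact_mod_cast hm1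
  have hfl : ⌊x + 1⌋ = 1 := by
    rw [show x + 1 = x + (1:ℤ) by norm_num, Int.floor_add_intCast,
      Int.floor_eq_zero_iff.mpr ⟨hx0.le, hx1⟩]
    norm_num
  have hfr : Int.fract (x + 1) = x := by
    rw [show x + 1 = x + (1:ℤ) by norm_num, Int.fract_add_intCast,
      Int.fract_eq_self.mpr ⟨hx0.le, hx1⟩]
  have hcl : (⌈x + 1⌉ : ℝ) = 2 := by
    have : ⌈x + 1⌉ = 2 := by
      rw [show x + 1 = x + (1:ℤ) by norm_num, Int.ceil_add_intCast]
      have : ⌈x⌉ = 1 := by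
        rw [Int.ceil_eq_iff]
        constructor <;> push_cast <;> linarith
      omega
    rw [this]; norm_num
  rw [D, if_neg (by push_neg; linarith), if_neg (by push_neg; linarith),
    if_neg (by rintro ⟨j, hj⟩
               have h1 : (1:ℝ) < j := by rw [← hj]; linarith
               have h2 : (j:ℝ) < 2 := by rw [← hj]; linarith
               have h1' : (1:ℤ) < j := by exact_mod_cast h1
               have h2' : j < 2 := by exact_mod_cast h2
               omega),
    if_neg (by rintro ⟨-, h⟩; linarith),
    if_neg (by rw [hfl]
               rw [Int.even_add]
               simp [hm]),
    hfr, hcl]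
  ring_nf

/-- part (a) of Lemma 3.3. -/
theorem D_ineq_a (n : ℕ) (hn : Odd n) (x : ℝ) (hx0 : 0 < x) (hx1 : x < 1) :
    (1 - x) * D n 0 + x * D n 1 - (1 / (1 + x)) * D n 0 - (x / (1 + x)) * D n (x + 1) ≥ 0 := by
  have h1x : (0:ℝ) < 1 + x := by linarith
  have h2x : (0:ℝ) < 2 - x := by linarith
  obtain ⟨t, ht⟩ := hn
  cases t with
  | zero =>
    subst ht
    simp only [show 2 * 0 + 1 = 1 from rfl]
    have e0 : D 1 0 = 1 := D_of_nonpos 1 0 le_rfl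
    have e1 : D 1 1 = 1 / 2 := by
      have := D_int_eval 0 1 (by norm_num) (by norm_num)
      norm_num at this
      rw [this, D_of_nonpos 0 0 le_rfl, D_of_gt 0 2 (by norm_num)]
      norm_num
    have e2 : D 1 (x + 1) = 0 := D_of_gt 1 (x + 1) (by push_cast; linarith)
    rw [e0, e1, e2]
    have : (1 - x) * 1 + x * (1 / 2) - 1 / (1 + x) * 1 - x / (1 + x) * 0
        = x * (1 - x) / (2 * (1 + x)) := by field_simp; ring
    rw [this]
    apply div_nonneg
    · nlinarith
    · linarith
  | succ s =>
    set m := 2 * s + 1 with hmdef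
    have hnm : n = m + 2 := by omega
    subst hnm
    have hm : Odd m := ⟨s, by omega⟩
    have hmeven : Even (m + 1) := Odd.add_one hm
    have e0 : D (m + 2) 0 = 1 := D_of_nonpos _ 0 le_rfl
    -- D (m+2) 1
    have e1 : D (m + 2) 1 = 1 / 2 + 1 / 2 * D (m + 1) 2 := by
      have := D_int_eval (m + 1) 1 (by norm_num) (by omega)
      norm_num at this
      rw [this, D_of_nonpos (m + 1) 0 le_rfl]
      ring
    -- D (m+2) (x+1)
    have e2 : D (m + 2) (x + 1)
        = ((1 - x) / (2 - x)) * D (m + 1) x + (1 / (2 - x)) * D (m + 1) 2 :=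
      D_last (m + 1) hmeven (by omega) x hx0 hx1
    -- D (m+1) x
    have e3 : D (m + 1) x = (1 - x) + x * D m 1 := by
      rw [D_frac_odd m hm x hx0 hx1, D_of_nonpos m 0 le_rfl]
      ring
    -- D m 1
    have e4 : D m 1 = 1 / 2 + 1 / 2 * D (2 * s) 2 := by
      have := D_int_eval (2 * s) 1 (by norm_num) (by omega)
      norm_num at this
      rw [hmdef, this, D_of_nonpos (2 * s) 0 le_rfl]
      ring
    have mono : D (2 * s) 2 ≤ D (m + 1) 2 := by
      have h := D_mono2 (2 * s) 2
      norm_num at h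
      have hidx : m + 1 = 2 * s + 2 := by omega
      rw [hidx]
      exact h
    have ha0 : 0 ≤ D (m + 1) 2 := D_nonneg _ _
    have hb0 : 0 ≤ D (2 * s) 2 := D_nonneg _ _
    set a := D (m + 1) 2
    set b := D (2 * s) 2
    rw [e0, e1, e2, e3, e4]
    have key : (1 - x) * 1 + x * (1 / 2 + 1 / 2 * a) - 1 / (1 + x) * 1
        - x / (1 + x) * ((1 - x) / (2 - x) * ((1 - x) + x * (1 / 2 + 1 / 2 * b))
          + 1 / (2 - x) * a)
        = x ^ 2 * (1 - x) * (a - b) / (2 * (1 + x) * (2 - x)) := by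
      field_simp
      ring
    rw [key]
    apply div_nonneg
    · have hab : 0 ≤ a - b := by linarith
      have h1 : (0:ℝ) ≤ x ^ 2 * (1 - x) := by nlinarith
      exact mul_nonneg h1 hab
    · positivity
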